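/- Every matrix in Z_Horn lies in the vanishing locus of the polynomial X ↦ det(H ∘ X): for all strictly positive reals d₁,…,d₅, y₁,…,y₅, z₁,…,z₅, the matrix X = diag(d₁,…,d₅) · B(y) · diag(z₁,…,z₅) satisfies det(H ∘ X) = 0, where ∘ denotes the entrywise (Hadamard) product, H is the Horn matrix, and B(y) is the 5×5 matrix with rows (1, 0, 0, y₄, y₅+1), (y₁+1, 1, 0, 0, y₅), (y₁, y₂+1, 1, 0, 0), (0, y₂, y₃+1, 1, 0), (0, 0, y₃, y₄+1, 1). -/

import Mathlib

open Matrix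

/-- The Horn matrix. -/
def Horn : Matrix (Fin 5) (Fin 5) ℝ :=
  !![1, -1,  1,  1, -1;
    -1,  1, -1,  1,  1;
     1, -1,  1, -1,  1;
     1,  1, -1,  1, -1;
    -1,  1,  1, -1,  1]

/-- The matrix `B(y)` from the parametrization of the Horn locus
(with `y₁ = y 0, …, y₅ = y 4`). -/
def Bmat (y : Fin 5 → ℝ) : Matrix (Fin 5) (Fin 5) ℝ :=
  !![1, 0, 0, y 3, y 4 + 1;
     y 0 + 1, 1, 0, 0, y 4;
     y 0, y 1 + 1, 1, 0, 0;
     0, y 1, y 2 + 1, 1, 0;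
     0, 0, y 2, y 3 + 1, 1]

set_option maxHeartbeats 2000000 in
theorem detHB (y : Fin 5 → ℝ) :
    det (!![(1:ℝ), 0, 0, y 3, -(y 4 + 1);
      -(y 0 + 1), 1, 0, 0, y 4;
      y 0, -(y 1 + 1), 1, 0, 0;
      0, y 1, -(y 2 + 1), 1, 0;
      0, 0, y 2, -(y 3 + 1), 1]) = 0 := by
  simp (config := {decide := true}) [det_succ_row_zero, Fin.sum_univ_succ, Fin.succAbove]
  ring

/-- every matrix of `Z_Horn` satisfies `det(H ∘ X) = 0`, where `∘` is the
Hadamard (entrywise) product. -/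
theorem ZHorn_vanishes (d y z : Fin 5 → ℝ)
    (hd : ∀ i, 0 < d i) (hy : ∀ i, 0 < y i) (hz : ∀ i, 0 < z i) :
    det (Matrix.hadamard Horn (diagonal d * Bmat y * diagonal z)) = 0 := by
  have h1 : Matrix.hadamard Horn (diagonal d * Bmat y * diagonal z)
      = diagonal d * Matrix.hadamard Horn (Bmat y) * diagonal z := by
    ext i j
    simp [Matrix.hadamard_apply, Matrix.diagonal_mul, Matrix.mul_diagonal]
    ring
  have h2 : Matrix.hadamard Horn (Bmat y)
      = !![(1:ℝ), 0, 0, y 3, -(y 4 + 1);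
          -(y 0 + 1), 1, 0, 0, y 4;
          y 0, -(y 1 + 1), 1, 0, 0;
          0, y 1, -(y 2 + 1), 1, 0;
          0, 0, y 2, -(y 3 + 1), 1] := by
    ext i j
    fin_cases i <;> fin_cases j <;>
      simp [Matrix.hadamard_apply, Horn, Bmat, Matrix.vecHead, Matrix.vecTail]
  rw [h1, h2, det_mul, det_mul, detHB, mul_zero, zero_mul]
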